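/- Let a, ρ̄, τ_γ > 0 and 0 < τ₁ < 1. For every natural number T with (a·ρ̄)/(T+1)^{τ₁} ≤ 1 and a·ρ̄/(T+1)^{τ₁} ≥ τ_γ/(T+1), it holds that 1 − a·ρ̄/(T+1)^{τ₁} ≤ ((T+1)/(T+2))^{τ_γ}. -/
import Mathlib

theorem stmt_6 (a ρ τγ τ₁ : ℝ) (ha : 0 < a) (hρ : 0 < ρ) (hτγ : 0 < τγ)
    (hτ₁ : 0 < τ₁) (hτ₁' : τ₁ < 1) (T : ℕ)
    (h1 : a * ρ / ((T : ℝ) + 1) ^ τ₁ ≤ 1)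
    (h2 : a * ρ / ((T : ℝ) + 1) ^ τ₁ ≥ τγ / ((T : ℝ) + 1)) :
    1 - a * ρ / ((T : ℝ) + 1) ^ τ₁ ≤ (((T : ℝ) + 1) / ((T : ℝ) + 2)) ^ τγ := by
  have hT1 : (0 : ℝ) < (T : ℝ) + 1 := by positivity
  have hT2 : (0 : ℝ) < (T : ℝ) + 2 := by positivity
  set x := a * ρ / ((T : ℝ) + 1) ^ τ₁ with hx
  have hratio : (0 : ℝ) < ((T : ℝ) + 1) / ((T : ℝ) + 2) := by positivity
  have step1 : 1 - x ≤ Real.exp (-x) := by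
    have := Real.add_one_le_exp (-x)
    linarith
  have step2 : Real.exp (-x) ≤ Real.exp (-(τγ / ((T : ℝ) + 1))) := by
    apply Real.exp_le_exp.mpr; linarith
  have step3 : Real.exp (-(τγ / ((T : ℝ) + 1))) ≤ (((T : ℝ) + 1) / ((T : ℝ) + 2)) ^ τγ := by
    rw [← Real.exp_log (Real.rpow_pos_of_pos hratio τγ), Real.exp_le_exp,
      Real.log_rpow hratio]
    have hlog : Real.log (((T : ℝ) + 2) / ((T : ℝ) + 1)) ≤ 1 / ((T : ℝ) + 1) := by
      have h := Real.log_le_sub_one_of_pos (show (0:ℝ) < ((T : ℝ) + 2) / ((T : ℝ) + 1) by positivity)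
      have : ((T : ℝ) + 2) / ((T : ℝ) + 1) - 1 = 1 / ((T : ℝ) + 1) := by
        field_simp; norm_num
      linarith
    have hinv : Real.log (((T : ℝ) + 1) / ((T : ℝ) + 2)) =
        -Real.log (((T : ℝ) + 2) / ((T : ℝ) + 1)) := by
      rw [← Real.log_inv]; congr 1; field_simp
    rw [hinv]
    have := mul_le_mul_of_nonneg_left hlog hτγ.le
    have h2 : τγ * (1 / ((T : ℝ) + 1)) = τγ / ((T : ℝ) + 1) := by ring
    nlinarith
  linarith
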